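/- Let P₁ be a Boolean function F₂ⁿ → F₂, and let s̄₁, …, s̄ₙ be functions where s̄_{j-1} depends only on the coordinates x_j,…,xₙ. Recursively define P_j(x) = P_{j-1}(x with x_{j-1} := s̄_{j-1}(x)) · P_{j-1}(x with x_{j-1} := s̄_{j-1}(x)+1) for j = 2,…,n+1. Then P₁ has a zero in F₂ⁿ if and only if P_{n+1} has a zero; moreover each P_j depends only on coordinates x_j,…,xₙ, so P_{n+1} is a constant, and P₁ has a zero if and only if the constant P_{n+1} equals 0. -/
import Mathlib


/-- the full elimination chain.  Starting from P₀ and functions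
s j depending only on coordinates > j, define
P (j+1) α = P j (α[j := s j α]) · P j (α[j := s j α + 1]).  Then P 0 has a zero
iff P n has a zero; each P j depends only on coordinates ≥ j, in particular
P n is constant, and P 0 has a zero iff that constant is 0.  (0-based indexing:
P j here is P_{j+1} of the paper.) -/
theorem elimination_chain {n : ℕ}
    (P : ℕ → (Fin n → ZMod 2) → ZMod 2)
    (s : Fin n → (Fin n → ZMod 2) → ZMod 2)
    (hs : ∀ j : Fin n, ∀ α β : Fin n → ZMod 2,
      (∀ i : Fin n, (j : ℕ) < (i : ℕ) → α i = β i) → s j α = s j β)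
    (hP : ∀ j : Fin n, ∀ α,
      P ((j : ℕ) + 1) α =
        P j (Function.update α j (s j α)) * P j (Function.update α j (s j α + 1))) :
    ((∃ α, P 0 α = 0) ↔ (∃ α, P n α = 0)) ∧
    (∀ j, j ≤ n → ∀ α β : Fin n → ZMod 2,
      (∀ i : Fin n, j ≤ (i : ℕ) → α i = β i) → P j α = P j β) ∧
    ((∃ α, P 0 α = 0) ↔ P n (fun _ => 0) = 0) := by
  have two_cases : ∀ a b : ZMod 2, a = b ∨ a = b + 1 := by decide
  have mulz : ∀ a b : ZMod 2, a * b = 0 → a = 0 ∨ b = 0 := by decide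
  -- dependence statement
  have dep : ∀ j, j ≤ n → ∀ α β : Fin n → ZMod 2,
      (∀ i : Fin n, j ≤ (i : ℕ) → α i = β i) → P j α = P j β := by
    intro j
    induction j with
    | zero =>
      intro _ α β h
      have : α = β := funext fun i => h i (Nat.zero_le _)
      rw [this]
    | succ j ih =>
      intro hj α β h
      have hjn : j < n := hj
      have hagree : ∀ i : Fin n, (j : ℕ) < (i : ℕ) → α i = β i :=
        fun i hi => h i hi
      have hsab : s ⟨j, hjn⟩ α = s ⟨j, hjn⟩ β := hs ⟨j, hjn⟩ α β hagree
      have key : ∀ v : ZMod 2,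
          P j (Function.update α ⟨j, hjn⟩ v) = P j (Function.update β ⟨j, hjn⟩ v) := by
        intro v
        apply ih (Nat.le_of_succ_le hj)
        intro i hi
        by_cases hij : i = ⟨j, hjn⟩
        · subst hij; simp
        · rw [Function.update_of_ne hij, Function.update_of_ne hij]
          apply h
          rcases Nat.lt_or_ge j (i : ℕ) with h' | h'
          · exact h'
          · exact absurd (Fin.ext (le_antisymm h' hi)) hij
      have e1 := hP ⟨j, hjn⟩ α
      have e2 := hP ⟨j, hjn⟩ β
      simp only [Fin.val_mk] at e1 e2 ⊢
      rw [e1, e2, hsab, key _, key _]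
  -- step equivalence
  have step : ∀ j : Fin n, ((∃ α, P j α = 0) ↔ (∃ α, P ((j : ℕ) + 1) α = 0)) := by
    intro j
    constructor
    · rintro ⟨α, hα⟩
      refine ⟨α, ?_⟩
      rw [hP j α]
      rcases two_cases (α j) (s j α) with hc | hc
      · have : Function.update α j (s j α) = α := by
          rw [← hc]; exact Function.update_eq_self _ _
        rw [this, hα, zero_mul]
      · have : Function.update α j (s j α + 1) = α := by
          rw [← hc]; exact Function.update_eq_self _ _
        rw [this, hα, mul_zero]
    · rintro ⟨α, hα⟩
      rw [hP j α] at hα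
      rcases mulz _ _ hα with h | h
      · exact ⟨_, h⟩
      · exact ⟨_, h⟩
  -- chain
  have chain : ∀ k, k ≤ n → ((∃ α, P 0 α = 0) ↔ (∃ α, P k α = 0)) := by
    intro k
    induction k with
    | zero => intro _; exact Iff.rfl
    | succ k ih =>
      intro hk
      have hkn : k < n := hk
      exact (ih (Nat.le_of_succ_le hk)).trans (step ⟨k, hkn⟩)
  have main := chain n le_rfl
  refine ⟨main, dep, main.trans ?_⟩
  constructor
  · rintro ⟨α, hα⟩
    rw [← hα]
    exact dep n le_rfl _ _ (fun i hi => absurd i.isLt (Nat.not_lt.mpr hi))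
  · intro h; exact ⟨_, h⟩
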